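/- arXiv:1709.03624 — 3 statements merged into one kernel-verified Lean document; each statement's English description precedes it below -/
import Mathlib

section
/- For any kinematically admissible û ∈ V and any statically admissible flux p̂, one has E_CRE(û, p̂)² = 2(J₁(û) + J₂(p̂)), where J₁(v) = ½∫_Ω A∇v·∇v − ∫_Ω f v is the potential energy functional and J₂(p) = ½∫_Ω A⁻¹p·p is the complementary energy functional. -/
open MeasureTheory Matrix


lemma isUnit_of_elliptic {d : ℕ} {M : Matrix (Fin d) (Fin d) ℝ} {α : ℝ} (hα : 0 < α)
    (hlow : ∀ ξ : Fin d → ℝ, α * (∑ i, ξ i ^ 2) ≤ M.mulVec ξ ⬝ᵥ ξ) : IsUnit M := by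
  rw [← Matrix.mulVec_injective_iff_isUnit]
  intro ξ₁ ξ₂ h
  have h0 : M.mulVec (ξ₁ - ξ₂) = 0 := by
    rw [Matrix.mulVec_sub, h, sub_self]
  have h1 := hlow (ξ₁ - ξ₂)
  rw [h0, zero_dotProduct] at h1
  have hnn : ∀ i ∈ Finset.univ, (0:ℝ) ≤ (ξ₁ - ξ₂) i ^ 2 := fun i _ => sq_nonneg _
  have hs0 : ∑ i, (ξ₁ - ξ₂) i ^ 2 = 0 := by
    have := Finset.sum_nonneg hnn
    nlinarith
  have hzero : ∀ i, (ξ₁ - ξ₂) i = 0 := by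
    intro i
    have := (Finset.sum_eq_zero_iff_of_nonneg hnn).mp hs0 i (Finset.mem_univ i)
    exact pow_eq_zero_iff (two_ne_zero) |>.mp this
  have : ξ₁ - ξ₂ = 0 := funext hzero
  exact sub_eq_zero.mp this

lemma symm_inv {d : ℕ} {M : Matrix (Fin d) (Fin d) ℝ} (hs : M.IsSymm) : (M⁻¹).IsSymm := by
  unfold Matrix.IsSymm at *
  rw [Matrix.transpose_nonsing_inv, hs]

lemma vecMul_eq_mulVec_of_symm {d : ℕ} {M : Matrix (Fin d) (Fin d) ℝ} (hs : M.IsSymm)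
    (x : Fin d → ℝ) : x ᵥ* M = M.mulVec x := by
  rw [← Matrix.mulVec_transpose, hs.eq]

lemma expand_cre {d : ℕ} {M : Matrix (Fin d) (Fin d) ℝ} (hs : M.IsSymm) (hM : IsUnit M)
    (p g : Fin d → ℝ) :
    M⁻¹.mulVec (p - M.mulVec g) ⬝ᵥ (p - M.mulVec g)
      = M⁻¹.mulVec p ⬝ᵥ p - 2 * (p ⬝ᵥ g) + M.mulVec g ⬝ᵥ g := by
  have hdet : IsUnit M.det := (Matrix.isUnit_iff_isUnit_det M).mp hM
  have hinv : M⁻¹.mulVec (M.mulVec g) = g := by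
    rw [Matrix.mulVec_mulVec, Matrix.nonsing_inv_mul M hdet, Matrix.one_mulVec]
  have hsinv : (M⁻¹).IsSymm := symm_inv hs
  have cross : M⁻¹.mulVec p ⬝ᵥ M.mulVec g = p ⬝ᵥ g := by
    rw [dotProduct_comm, Matrix.dotProduct_mulVec, vecMul_eq_mulVec_of_symm hsinv, hinv,
      dotProduct_comm]
  have last : g ⬝ᵥ M.mulVec g = M.mulVec g ⬝ᵥ g := by
    rw [Matrix.dotProduct_mulVec, vecMul_eq_mulVec_of_symm hs]
  rw [Matrix.mulVec_sub, hinv, sub_dotProduct, dotProduct_sub,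
    dotProduct_sub, cross, last, dotProduct_comm g p]
  ring

lemma inv_quad_bounds {d : ℕ} {M : Matrix (Fin d) (Fin d) ℝ} (hs : M.IsSymm) {α : ℝ} (hα : 0 < α)
    (hlow : ∀ ξ : Fin d → ℝ, α * (∑ i, ξ i ^ 2) ≤ M.mulVec ξ ⬝ᵥ ξ) (p : Fin d → ℝ) :
    0 ≤ M⁻¹.mulVec p ⬝ᵥ p ∧ M⁻¹.mulVec p ⬝ᵥ p ≤ (1/α) * ∑ i, p i ^ 2 := by
  have hM := isUnit_of_elliptic hα hlow
  have hdet : IsUnit M.det := (Matrix.isUnit_iff_isUnit_det M).mp hM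
  set q := M⁻¹.mulVec p with hq
  have hMq : M.mulVec q = p := by
    rw [hq, Matrix.mulVec_mulVec, Matrix.mul_nonsing_inv M hdet, Matrix.one_mulVec]
  have key : M⁻¹.mulVec p ⬝ᵥ p = p ⬝ᵥ q := by
    rw [← hq, dotProduct_comm]
  have hpq : p ⬝ᵥ q = M.mulVec q ⬝ᵥ q := by rw [hMq]
  have hlb := hlow q
  have hSq : (0:ℝ) ≤ ∑ i, q i ^ 2 := Finset.sum_nonneg fun i _ => sq_nonneg _
  have hSp : (0:ℝ) ≤ ∑ i, p i ^ 2 := Finset.sum_nonneg fun i _ => sq_nonneg _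
  have ht0 : 0 ≤ p ⬝ᵥ q := by rw [hpq]; nlinarith
  have hcs : (p ⬝ᵥ q) ^ 2 ≤ (∑ i, p i ^ 2) * ∑ i, q i ^ 2 := by
    have := Finset.sum_mul_sq_le_sq_mul_sq Finset.univ p q
    simpa [dotProduct] using this
  constructor
  · rw [key]; exact ht0
  · rw [key]
    have h1 : α * (∑ i, q i ^ 2) ≤ p ⬝ᵥ q := by rw [hpq]; exact hlb
    have h2 : α * (p ⬝ᵥ q) ^ 2 ≤ α * ((∑ i, p i ^ 2) * ∑ i, q i ^ 2) :=
      mul_le_mul_of_nonneg_left hcs hα.le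
    have h3 : (∑ i, p i ^ 2) * (α * ∑ i, q i ^ 2) ≤ (∑ i, p i ^ 2) * (p ⬝ᵥ q) :=
      mul_le_mul_of_nonneg_left h1 hSp
    rcases ht0.eq_or_lt with h | h
    · rw [← h]; positivity
    · have h4 : α * (p ⬝ᵥ q) ≤ ∑ i, p i ^ 2 := by nlinarith
      calc p ⬝ᵥ q = (1/α) * (α * (p ⬝ᵥ q)) := by field_simp
        _ ≤ (1/α) * ∑ i, p i ^ 2 := by
            apply mul_le_mul_of_nonneg_left h4 (by positivity)

lemma measurable_det_family {X : Type*} [MeasurableSpace X] {d : ℕ}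
    (M : X → Matrix (Fin d) (Fin d) ℝ) (h : ∀ i j, Measurable fun x => M x i j) :
    Measurable fun x => (M x).det := by
  simp_rw [Matrix.det_apply']
  exact Finset.measurable_sum _ fun σ _ =>
    (Finset.measurable_prod _ fun i _ => h (σ i) i).const_mul _

lemma measurable_inv_entry {X : Type*} [MeasurableSpace X] {d : ℕ}
    (M : X → Matrix (Fin d) (Fin d) ℝ) (h : ∀ i j, Measurable fun x => M x i j) (i j : Fin d) :
    Measurable fun x => (M x)⁻¹ i j := by
  have hadj : Measurable fun x => (M x).adjugate i j := by
    simp_rw [Matrix.adjugate_apply]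
    apply measurable_det_family
    intro i' j'
    simp_rw [Matrix.updateRow_apply]
    by_cases hij : i' = j
    · simp [hij]
    · simp [hij]; exact h i' j'
  have hdet : Measurable fun x => Ring.inverse (M x).det := by
    simp_rw [Ring.inverse_eq_inv']
    exact (measurable_det_family M h).inv
  simp_rw [Matrix.inv_def, Matrix.smul_apply, smul_eq_mul]
  exact hdet.mul hadj

lemma euclid_abs_apply_le_norm {d : ℕ} (x : EuclideanSpace ℝ (Fin d)) (i : Fin d) :
    |x i| ≤ ‖x‖ := by
  rw [EuclideanSpace.norm_eq, ← Real.sqrt_sq_eq_abs]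
  apply Real.sqrt_le_sqrt
  calc x i ^ 2 = ‖x i‖ ^ 2 := by rw [Real.norm_eq_abs, sq_abs]
    _ ≤ ∑ j, ‖x j‖ ^ 2 :=
        Finset.single_le_sum (f := fun j => ‖x j‖ ^ 2) (fun j _ => sq_nonneg _)
          (Finset.mem_univ i)

lemma mul_L2_integrable {X : Type*} [MeasurableSpace X] {μ : Measure X} {f g : X → ℝ}
    (hf : MemLp f 2 μ) (hg : MemLp g 2 μ) : Integrable (fun x => f x * g x) μ := by
  have := hf.smul (r := 1) hg
  rw [memLp_one_iff_integrable] at this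
  have heq : (fun x => f x * g x) = g • f := by
    funext x; simp [smul_eq_mul, mul_comm]
  rw [heq]; exact this

/-- The gradient of a function on `ℝ^d`, viewed as a plain vector in `Fin d → ℝ`. -/
noncomputable def grad {d : ℕ} (v : EuclideanSpace ℝ (Fin d) → ℝ)
    (x : EuclideanSpace ℝ (Fin d)) : Fin d → ℝ :=
  (gradient v x : EuclideanSpace ℝ (Fin d))

/-- For a kinematically admissible `uhat ∈ V` and a statically admissible flux `phat`,
the constitutive relation error satisfies
`E_CRE(uhat,phat)² = 2 (J₁(uhat) + J₂(phat))`, where `J₁` is the potential energy functional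
and `J₂` the complementary energy functional. -/
theorem cre_eq_two_energy_sum {d : ℕ}
    (Ω : Set (EuclideanSpace ℝ (Fin d)))
    (hΩopen : IsOpen Ω) (hΩbdd : Bornology.IsBounded Ω)
    (A : EuclideanSpace ℝ (Fin d) → Matrix (Fin d) (Fin d) ℝ)
    (hAmeas : ∀ i j, Measurable fun x => A x i j)
    (hAsymm : ∀ x ∈ Ω, (A x).IsSymm)
    (α β : ℝ) (hα : 0 < α) (hβ : 0 < β)
    (hell : ∀ᵐ x ∂(volume.restrict Ω), ∀ ξ : Fin d → ℝ,
      α * (∑ i, ξ i ^ 2) ≤ (A x).mulVec ξ ⬝ᵥ ξ ∧ (A x).mulVec ξ ⬝ᵥ ξ ≤ β * (∑ i, ξ i ^ 2))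
    (V : Submodule ℝ (EuclideanSpace ℝ (Fin d) → ℝ))
    (hVdiff : ∀ v ∈ V, ContDiffOn ℝ 1 v Ω)
    (hVL2 : ∀ v ∈ V, MemLp v 2 (volume.restrict Ω))
    (hVgradL2 : ∀ v ∈ V, MemLp (gradient v) 2 (volume.restrict Ω))
    (f : EuclideanSpace ℝ (Fin d) → ℝ) (hf : MemLp f 2 (volume.restrict Ω))
    (u : EuclideanSpace ℝ (Fin d) → ℝ) (hu : u ∈ V)
    (husol : ∀ v ∈ V,
      ∫ x in Ω, (A x).mulVec (grad u x) ⬝ᵥ grad v x = ∫ x in Ω, f x * v x)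
    (uhat : EuclideanSpace ℝ (Fin d) → ℝ) (huhat : uhat ∈ V)
    (phat : EuclideanSpace ℝ (Fin d) → Fin d → ℝ)
    (hphatL2 : MemLp phat 2 (volume.restrict Ω))
    (hphatSA : ∀ v ∈ V, ∫ x in Ω, phat x ⬝ᵥ grad v x = ∫ x in Ω, f x * v x) :
    ∫ x in Ω, ((A x)⁻¹).mulVec (phat x - (A x).mulVec (grad uhat x))
        ⬝ᵥ (phat x - (A x).mulVec (grad uhat x))
      = 2 * (((1 / 2) * ∫ x in Ω, (A x).mulVec (grad uhat x) ⬝ᵥ grad uhat x)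
              - (∫ x in Ω, f x * uhat x)
              + (1 / 2) * ∫ x in Ω, ((A x)⁻¹).mulVec (phat x) ⬝ᵥ phat x) := by
  have hΩm : MeasurableSet Ω := hΩopen.measurableSet
  have hmem : ∀ᵐ x ∂(volume.restrict Ω), x ∈ Ω := ae_restrict_mem hΩm
  have hgL2 : MemLp (gradient uhat) 2 (volume.restrict Ω) := hVgradL2 uhat huhat
  have hgi : ∀ i, MemLp (fun x => grad uhat x i) 2 (volume.restrict Ω) := by
    intro i
    refine hgL2.of_le ?_ ?_
    · exact ((EuclideanSpace.proj (𝕜 := ℝ) i).continuous).comp_aestronglyMeasurable hgL2.1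
    · filter_upwards with x
      rw [Real.norm_eq_abs]
      exact euclid_abs_apply_le_norm (gradient uhat x) i
  have hpi : ∀ i, MemLp (fun x => phat x i) 2 (volume.restrict Ω) := by
    intro i
    refine hphatL2.of_le ((continuous_apply i).comp_aestronglyMeasurable hphatL2.1) ?_
    filter_upwards with x using norm_le_pi_norm (phat x) i
  have hgm : ∀ i, AEMeasurable (fun x => grad uhat x i) (volume.restrict Ω) :=
    fun i => (hgi i).1.aemeasurable
  have hpm : ∀ i, AEMeasurable (fun x => phat x i) (volume.restrict Ω) :=
    fun i => (hpi i).1.aemeasurable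
  have hInt_pg : Integrable (fun x => phat x ⬝ᵥ grad uhat x) (volume.restrict Ω) := by
    have hrw : (fun x => phat x ⬝ᵥ grad uhat x)
        = fun x => ∑ i, phat x i * grad uhat x i := rfl
    rw [hrw]
    exact integrable_finset_sum _ fun i _ => mul_L2_integrable (hpi i) (hgi i)
  have hInt_g2 : Integrable (fun x => ∑ i, grad uhat x i ^ 2) (volume.restrict Ω) :=
    integrable_finset_sum _ fun i _ => by
      simpa [sq] using mul_L2_integrable (hgi i) (hgi i)
  have hInt_p2 : Integrable (fun x => ∑ i, phat x i ^ 2) (volume.restrict Ω) :=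
    integrable_finset_sum _ fun i _ => by
      simpa [sq] using mul_L2_integrable (hpi i) (hpi i)
  have hmes_gg : AEStronglyMeasurable
      (fun x => (A x).mulVec (grad uhat x) ⬝ᵥ grad uhat x) (volume.restrict Ω) := by
    have hrw : (fun x => (A x).mulVec (grad uhat x) ⬝ᵥ grad uhat x)
        = fun x => ∑ i, (∑ j, A x i j * grad uhat x j) * grad uhat x i := rfl
    rw [hrw]
    exact (Finset.aemeasurable_fun_sum _ fun i _ =>
      ((Finset.aemeasurable_fun_sum _ fun j _ =>
        ((hAmeas i j).aemeasurable.mul (hgm j))).mul (hgm i))).aestronglyMeasurable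
  have hmes_pp : AEStronglyMeasurable
      (fun x => ((A x)⁻¹).mulVec (phat x) ⬝ᵥ phat x) (volume.restrict Ω) := by
    have hrw : (fun x => ((A x)⁻¹).mulVec (phat x) ⬝ᵥ phat x)
        = fun x => ∑ i, (∑ j, (A x)⁻¹ i j * phat x j) * phat x i := rfl
    rw [hrw]
    exact (Finset.aemeasurable_fun_sum _ fun i _ =>
      ((Finset.aemeasurable_fun_sum _ fun j _ =>
        ((measurable_inv_entry A hAmeas i j).aemeasurable.mul (hpm j))).mul
          (hpm i))).aestronglyMeasurable
  have hInt_gg : Integrable (fun x => (A x).mulVec (grad uhat x) ⬝ᵥ grad uhat x)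
      (volume.restrict Ω) := by
    refine Integrable.mono' (hInt_g2.const_mul β) hmes_gg ?_
    filter_upwards [hell] with x hx
    have h1 := (hx (grad uhat x)).1
    have h2 := (hx (grad uhat x)).2
    have hS : (0:ℝ) ≤ ∑ i, grad uhat x i ^ 2 := Finset.sum_nonneg fun i _ => sq_nonneg _
    rw [Real.norm_eq_abs, abs_of_nonneg (le_trans (by positivity) h1)]
    exact h2
  have hInt_pp : Integrable (fun x => ((A x)⁻¹).mulVec (phat x) ⬝ᵥ phat x)
      (volume.restrict Ω) := by
    refine Integrable.mono' (hInt_p2.const_mul (1/α)) hmes_pp ?_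
    filter_upwards [hell, hmem] with x hx hxΩ
    obtain ⟨hb1, hb2⟩ := inv_quad_bounds (hAsymm x hxΩ) hα (fun ξ => (hx ξ).1) (phat x)
    rw [Real.norm_eq_abs, abs_of_nonneg hb1]
    exact hb2
  have hcongr : (fun x => ((A x)⁻¹).mulVec (phat x - (A x).mulVec (grad uhat x))
        ⬝ᵥ (phat x - (A x).mulVec (grad uhat x)))
      =ᵐ[volume.restrict Ω]
      fun x => ((A x)⁻¹).mulVec (phat x) ⬝ᵥ phat x - 2 * (phat x ⬝ᵥ grad uhat x)
        + (A x).mulVec (grad uhat x) ⬝ᵥ grad uhat x := by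
    filter_upwards [hell, hmem] with x hx hxΩ
    exact expand_cre (hAsymm x hxΩ) (isUnit_of_elliptic hα fun ξ => (hx ξ).1) _ _
  have hSA := hphatSA uhat huhat
  have hInt_pg2 : Integrable (fun x => 2 * (phat x ⬝ᵥ grad uhat x)) (volume.restrict Ω) :=
    hInt_pg.const_mul 2
  have hfg : Integrable (fun x => ((A x)⁻¹).mulVec (phat x) ⬝ᵥ phat x
      - 2 * (phat x ⬝ᵥ grad uhat x)) (volume.restrict Ω) := hInt_pp.sub hInt_pg2
  rw [integral_congr_ae hcongr, integral_add hfg hInt_gg, integral_sub hInt_pp hInt_pg2,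
    integral_const_mul, hSA]
  ring
end

section
/- (Guaranteed CRE error bound) For any kinematically admissible û ∈ V, one has |||u − û||| = E_CRE(û, q) where q = A∇u is the exact flux, and |||u − û||| ≤ E_CRE(û, p̂) for every statically admissible flux p̂. Hence any statically admissible flux field yields a guaranteed, fully computable upper bound on the energy-norm error. -/
open MeasureTheory Matrix

namespace CREAux
variable {d : ℕ}

lemma quad_single_single (M : Matrix (Fin d) (Fin d) ℝ) (i j : Fin d) :
    M *ᵥ (Pi.single i 1 : Fin d → ℝ) ⬝ᵥ (Pi.single j 1) = M j i := by
  simp [Matrix.mulVec_single, dotProduct_single]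

lemma sum_sq_single (i : Fin d) : ∑ k, ((Pi.single i 1 : Fin d → ℝ) k) ^ 2 = 1 := by
  have h : ∀ k, (Pi.single i 1 : Fin d → ℝ) k ^ 2 = if k = i then 1 else 0 := by
    intro k; by_cases h : k = i <;> simp [Pi.single_apply, h]
  simp [h]

lemma sum_sq_single_add (i j : Fin d) (hij : i ≠ j) :
    ∑ k, (((Pi.single i 1 + Pi.single j 1 : Fin d → ℝ)) k) ^ 2 = 2 := by
  have h : ∀ k, (((Pi.single i 1 + Pi.single j 1 : Fin d → ℝ)) k) ^ 2
      = (if k = i then 1 else 0) + (if k = j then 1 else 0) := by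
    intro k
    by_cases h1 : k = i <;> by_cases h2 : k = j
    · exact absurd (h1 ▸ h2) hij
    all_goals simp [Pi.single_apply, h1, h2, if_neg (Ne.symm hij), if_neg hij]
  rw [Finset.sum_congr rfl fun k _ => h k, Finset.sum_add_distrib]
  simp; norm_num

lemma sum_sq_single_sub (i j : Fin d) (hij : i ≠ j) :
    ∑ k, (((Pi.single i 1 - Pi.single j 1 : Fin d → ℝ)) k) ^ 2 = 2 := by
  have h : ∀ k, (((Pi.single i 1 - Pi.single j 1 : Fin d → ℝ)) k) ^ 2
      = (if k = i then 1 else 0) + (if k = j then 1 else 0) := by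
    intro k
    by_cases h1 : k = i <;> by_cases h2 : k = j
    · exact absurd (h1 ▸ h2) hij
    all_goals simp [Pi.single_apply, h1, h2, if_neg (Ne.symm hij), if_neg hij]
  rw [Finset.sum_congr rfl fun k _ => h k, Finset.sum_add_distrib]
  simp; norm_num

/-- entry bound for a symmetric PSD matrix with quadratic form bounded by `c`. -/
lemma entry_bound (M : Matrix (Fin d) (Fin d) ℝ) (hsym : M.IsSymm) (c : ℝ)
    (h0 : ∀ ξ : Fin d → ℝ, 0 ≤ M *ᵥ ξ ⬝ᵥ ξ)
    (h1 : ∀ ξ : Fin d → ℝ, M *ᵥ ξ ⬝ᵥ ξ ≤ c * ∑ k, ξ k ^ 2)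
    (i j : Fin d) : |M i j| ≤ c := by
  have hdiag : ∀ k, 0 ≤ M k k ∧ M k k ≤ c := by
    intro k
    have h0' := h0 (Pi.single k 1)
    have h1' := h1 (Pi.single k 1)
    rw [quad_single_single] at h0' h1'
    rw [sum_sq_single] at h1'
    constructor <;> linarith
  rcases eq_or_ne i j with rfl | hij
  · rw [abs_le]; constructor <;> linarith [(hdiag i).1, (hdiag i).2]
  · have qp0 := h0 (Pi.single i 1 + Pi.single j 1)
    have qm0 := h0 (Pi.single i 1 - Pi.single j 1)
    have qp1 := h1 (Pi.single i 1 + Pi.single j 1)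
    have qm1 := h1 (Pi.single i 1 - Pi.single j 1)
    rw [sum_sq_single_add i j hij] at qp1
    rw [sum_sq_single_sub i j hij] at qm1
    have hexp : ∀ (a b : ℝ) (v w : Fin d → ℝ), True := fun _ _ _ _ => trivial
    have ep : M *ᵥ ((Pi.single i 1 + Pi.single j 1 : Fin d → ℝ)) ⬝ᵥ (Pi.single i 1 + Pi.single j 1)
        = M i i + M i j + M i j + M j j := by
      rw [Matrix.mulVec_add, add_dotProduct, dotProduct_add, dotProduct_add,
        quad_single_single, quad_single_single, quad_single_single, quad_single_single]
      rw [hsym.apply i j]; ring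
    have em : M *ᵥ ((Pi.single i 1 - Pi.single j 1 : Fin d → ℝ)) ⬝ᵥ (Pi.single i 1 - Pi.single j 1)
        = M i i - M i j - M i j + M j j := by
      rw [Matrix.mulVec_sub, sub_dotProduct, dotProduct_sub, dotProduct_sub,
        quad_single_single, quad_single_single, quad_single_single, quad_single_single]
      rw [hsym.apply i j]; ring
    rw [ep] at qp0 qp1
    rw [em] at qm0 qm1
    rw [abs_le]
    constructor <;> linarith [(hdiag i).1, (hdiag i).2, (hdiag j).1, (hdiag j).2]

lemma isUnit_det_of_posdef {M : Matrix (Fin d) (Fin d) ℝ} {a : ℝ} (ha : 0 < a)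
    (hl : ∀ ξ : Fin d → ℝ, a * ∑ k, ξ k ^ 2 ≤ M *ᵥ ξ ⬝ᵥ ξ) : IsUnit M.det := by
  rw [isUnit_iff_ne_zero]
  intro hdet
  obtain ⟨v, hv0, hMv⟩ := (Matrix.exists_mulVec_eq_zero_iff).2 hdet
  have h := hl v
  rw [hMv, zero_dotProduct] at h
  obtain ⟨k, hk⟩ := Function.ne_iff.1 hv0
  have hsum : v k ^ 2 ≤ ∑ l, v l ^ 2 :=
    Finset.single_le_sum (fun l _ => sq_nonneg (v l)) (Finset.mem_univ k)
  have hk' : v k ≠ 0 := hk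
  have : 0 < v k ^ 2 := by positivity
  nlinarith

lemma symm_mulVec_dot {M : Matrix (Fin d) (Fin d) ℝ} (hsym : M.IsSymm) (a b : Fin d → ℝ) :
    M *ᵥ a ⬝ᵥ b = a ⬝ᵥ (M *ᵥ b) := by
  rw [Matrix.dotProduct_mulVec, ← Matrix.mulVec_transpose, hsym]

lemma inv_symm {M : Matrix (Fin d) (Fin d) ℝ} (hsym : M.IsSymm) : (M⁻¹).IsSymm := by
  unfold Matrix.IsSymm
  rw [Matrix.transpose_nonsing_inv, hsym]

lemma inv_mulVec_cancel {M : Matrix (Fin d) (Fin d) ℝ} (h : IsUnit M.det) (ξ : Fin d → ℝ) :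
    M⁻¹ *ᵥ (M *ᵥ ξ) = ξ := by
  rw [Matrix.mulVec_mulVec, Matrix.nonsing_inv_mul M h, Matrix.one_mulVec]

lemma mulVec_inv_cancel {M : Matrix (Fin d) (Fin d) ℝ} (h : IsUnit M.det) (ξ : Fin d → ℝ) :
    M *ᵥ (M⁻¹ *ᵥ ξ) = ξ := by
  rw [Matrix.mulVec_mulVec, Matrix.mul_nonsing_inv M h, Matrix.one_mulVec]

/-- quadratic-form bounds for the inverse of an `a`-elliptic symmetric matrix. -/
lemma inv_form_bounds {M : Matrix (Fin d) (Fin d) ℝ} {a : ℝ} (ha : 0 < a)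
    (hl : ∀ ξ : Fin d → ℝ, a * ∑ k, ξ k ^ 2 ≤ M *ᵥ ξ ⬝ᵥ ξ) (ξ : Fin d → ℝ) :
    0 ≤ M⁻¹ *ᵥ ξ ⬝ᵥ ξ ∧ M⁻¹ *ᵥ ξ ⬝ᵥ ξ ≤ a⁻¹ * ∑ k, ξ k ^ 2 := by
  have hdet := isUnit_det_of_posdef ha hl
  set η := M⁻¹ *ᵥ ξ with hη
  have hMη : M *ᵥ η = ξ := mulVec_inv_cancel hdet ξ
  have h1 : M⁻¹ *ᵥ ξ ⬝ᵥ ξ = M *ᵥ η ⬝ᵥ η := by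
    rw [hMη, ← hη, dotProduct_comm]
  have h2 : a * ∑ k, η k ^ 2 ≤ M *ᵥ η ⬝ᵥ η := hl η
  have hSη : (0:ℝ) ≤ ∑ k, η k ^ 2 := Finset.sum_nonneg fun k _ => sq_nonneg _
  have hSξ : (0:ℝ) ≤ ∑ k, ξ k ^ 2 := Finset.sum_nonneg fun k _ => sq_nonneg _
  have hdot : M *ᵥ η ⬝ᵥ η = ∑ k, η k * ξ k := by
    rw [dotProduct_comm, ← hMη]
    simp [dotProduct]
  have hcs : (∑ k, η k * ξ k) ^ 2 ≤ (∑ k, η k ^ 2) * ∑ k, ξ k ^ 2 :=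
    Finset.sum_mul_sq_le_sq_mul_sq _ _ _
  constructor
  · rw [h1]; nlinarith
  · rw [h1, hdot]
    set t := ∑ k, η k * ξ k with ht
    have h2' : a * ∑ k, η k ^ 2 ≤ t := hdot ▸ h2
    have haS : (0:ℝ) ≤ a * ∑ k, η k ^ 2 := mul_nonneg ha.le hSη
    have ht0 : 0 ≤ t := le_trans haS h2'
    rcases ht0.eq_or_lt with h | h
    · rw [← h]; positivity
    · have h3 : (∑ k, η k ^ 2) ≤ t / a := (le_div_iff₀ ha).2 (by linarith [h2'])
      have h4 : t ^ 2 ≤ (t / a) * ∑ k, ξ k ^ 2 :=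
        le_trans hcs (mul_le_mul_of_nonneg_right h3 hSξ)
      have h5 : t * t ≤ t * (a⁻¹ * ∑ k, ξ k ^ 2) := by
        calc t * t = t ^ 2 := (sq t).symm
        _ ≤ (t / a) * ∑ k, ξ k ^ 2 := h4
        _ = t * (a⁻¹ * ∑ k, ξ k ^ 2) := by ring
      exact le_of_mul_le_mul_left h5 h

/-- the central algebraic (Prager–Synge) expansion. -/
lemma key_expand {M : Matrix (Fin d) (Fin d) ℝ} {a : ℝ} (ha : 0 < a) (hsym : M.IsSymm)
    (hl : ∀ ξ : Fin d → ℝ, a * ∑ k, ξ k ^ 2 ≤ M *ᵥ ξ ⬝ᵥ ξ) (s w : Fin d → ℝ) :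
    M⁻¹ *ᵥ (s + M *ᵥ w) ⬝ᵥ (s + M *ᵥ w)
      = M⁻¹ *ᵥ s ⬝ᵥ s + 2 * (s ⬝ᵥ w) + M *ᵥ w ⬝ᵥ w := by
  have hdet := isUnit_det_of_posdef ha hl
  have hinv : M⁻¹ *ᵥ (M *ᵥ w) = w := inv_mulVec_cancel hdet w
  rw [Matrix.mulVec_add, hinv, add_dotProduct, dotProduct_add,
    dotProduct_add]
  have hcross : M⁻¹ *ᵥ s ⬝ᵥ (M *ᵥ w) = s ⬝ᵥ w := by
    rw [symm_mulVec_dot (inv_symm hsym), inv_mulVec_cancel hdet, dotProduct_comm]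
  have hws : w ⬝ᵥ s = s ⬝ᵥ w := dotProduct_comm _ _
  have hwMw : w ⬝ᵥ (M *ᵥ w) = M *ᵥ w ⬝ᵥ w := dotProduct_comm _ _
  rw [hcross, hws, hwMw]; ring

variable {X : Type*} [MeasurableSpace X]

lemma measurable_det_of_entries {B : X → Matrix (Fin d) (Fin d) ℝ}
    (hB : ∀ i j, Measurable fun x => B x i j) : Measurable fun x => (B x).det := by
  simp only [Matrix.det_apply']
  exact Finset.measurable_sum _ fun σ _ =>
    (measurable_const.mul (Finset.measurable_prod _ fun i _ => hB (σ i) i))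

lemma measurable_inv_entries {B : X → Matrix (Fin d) (Fin d) ℝ}
    (hB : ∀ i j, Measurable fun x => B x i j) (i j : Fin d) :
    Measurable fun x => (B x)⁻¹ i j := by
  have h : ∀ x, (B x)⁻¹ i j = Ring.inverse (B x).det * (B x).adjugate i j := by
    intro x; rw [Matrix.inv_def]; simp [Matrix.smul_apply]
  simp only [h, Ring.inverse_eq_inv']
  refine ((measurable_det_of_entries hB).inv).mul ?_
  have h2 : ∀ x, (B x).adjugate i j = ((B x).updateRow j (Pi.single i 1)).det := by
    intro x; rw [Matrix.adjugate_apply]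
  simp only [h2]
  refine measurable_det_of_entries fun k l => ?_
  rcases eq_or_ne k j with rfl | hkj
  · simp only [Matrix.updateRow_self]; exact measurable_const
  · simp only [Matrix.updateRow_apply, if_neg hkj]; exact hB k l

variable {μ : Measure X}

/-- product of two L² functions is integrable. -/
lemma l2_mul_integrable {f g : X → ℝ} (hf : MemLp f 2 μ) (hg : MemLp g 2 μ) :
    Integrable (fun x => f x * g x) μ := by
  have hb : Integrable (fun x => (f x ^ 2 + g x ^ 2) / 2) μ :=
    (hf.integrable_sq.add hg.integrable_sq).div_const 2
  refine Integrable.mono' hb (hf.1.mul hg.1) (Filter.Eventually.of_forall fun x => ?_)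
  rw [Real.norm_eq_abs, abs_mul]
  nlinarith [sq_nonneg (|f x| - |g x|), sq_abs (f x), sq_abs (g x), abs_nonneg (f x),
    abs_nonneg (g x)]

/-- a.e. bounded measurable times L² is L². -/
lemma bdd_mul_memL2 {B : X → ℝ} {g : X → ℝ} {c : ℝ} (hBm : Measurable B)
    (hBb : ∀ᵐ x ∂μ, |B x| ≤ c) (hg : MemLp g 2 μ) :
    MemLp (fun x => B x * g x) 2 μ := by
  refine MemLp.of_le (hg.const_mul c) (hBm.aestronglyMeasurable.mul hg.1) ?_
  filter_upwards [hBb] with x hx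
  rw [Real.norm_eq_abs, Real.norm_eq_abs, abs_mul, abs_mul]
  exact mul_le_mul_of_nonneg_right (le_trans hx (le_abs_self c)) (abs_nonneg _)

/-- dot product of componentwise-L² vector fields is integrable. -/
lemma integrable_dot {g h : X → Fin d → ℝ}
    (hg : ∀ i, MemLp (fun x => g x i) 2 μ) (hh : ∀ i, MemLp (fun x => h x i) 2 μ) :
    Integrable (fun x => g x ⬝ᵥ h x) μ := by
  simp only [dotProduct]
  exact integrable_finset_sum _ fun i _ => l2_mul_integrable (hg i) (hh i)

/-- `(B x) *ᵥ g x ⬝ᵥ h x` is integrable for a.e.-bounded measurable matrix field `B`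
and componentwise-L² `g`, `h`. -/
lemma integrable_mulVec_dot {B : X → Matrix (Fin d) (Fin d) ℝ} {c : ℝ}
    (hBm : ∀ i j, Measurable fun x => B x i j)
    (hBb : ∀ i j, ∀ᵐ x ∂μ, |B x i j| ≤ c)
    {g h : X → Fin d → ℝ}
    (hg : ∀ i, MemLp (fun x => g x i) 2 μ) (hh : ∀ i, MemLp (fun x => h x i) 2 μ) :
    Integrable (fun x => (B x) *ᵥ g x ⬝ᵥ h x) μ := by
  have heq : ∀ x, (B x) *ᵥ g x ⬝ᵥ h x = ∑ i, ∑ j, B x i j * (g x j * h x i) := by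
    intro x
    simp only [dotProduct, Matrix.mulVec, Finset.sum_mul]
    exact Finset.sum_congr rfl fun i _ => Finset.sum_congr rfl fun j _ => by ring
  simp only [heq]
  refine integrable_finset_sum _ fun i _ => integrable_finset_sum _ fun j _ => ?_
  refine Integrable.bdd_mul (c := c) (l2_mul_integrable (hg j) (hh i))
    ((hBm i j).aestronglyMeasurable) ?_
  filter_upwards [hBb i j] with x hx
  rwa [Real.norm_eq_abs]

/-- componentwise mulVec is L² when entries bounded and components L². -/
lemma mulVec_comp_memL2 {B : X → Matrix (Fin d) (Fin d) ℝ} {c : ℝ}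
    (hBm : ∀ i j, Measurable fun x => B x i j)
    (hBb : ∀ i j, ∀ᵐ x ∂μ, |B x i j| ≤ c)
    {g : X → Fin d → ℝ} (hg : ∀ i, MemLp (fun x => g x i) 2 μ) (i : Fin d) :
    MemLp (fun x => ((B x) *ᵥ g x) i) 2 μ := by
  have heq : ∀ x, ((B x) *ᵥ g x) i = ∑ j, B x i j * g x j := fun x => rfl
  simp only [heq]
  have := memLp_finset_sum' (μ := μ) (p := 2) Finset.univ
    (f := fun j x => B x i j * g x j) (fun j _ => bdd_mul_memL2 (hBm i j) (hBb i j) (hg j))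
  convert this using 1
  ext x
  simp

end CREAux

open CREAux in
/-- Guaranteed CRE error bound: for any kinematically admissible `uhat ∈ V`,
`|||u − uhat||| = E_CRE(uhat, q)` with `q = A∇u` the exact flux, and
`|||u − uhat||| ≤ E_CRE(uhat, phat)` for every statically admissible flux `phat`. -/
theorem cre_guaranteed_error_bound {d : ℕ}
    (Ω : Set (EuclideanSpace ℝ (Fin d)))
    (hΩopen : IsOpen Ω) (hΩbdd : Bornology.IsBounded Ω)
    (A : EuclideanSpace ℝ (Fin d) → Matrix (Fin d) (Fin d) ℝ)
    (hAmeas : ∀ i j, Measurable fun x => A x i j)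
    (hAsymm : ∀ x ∈ Ω, (A x).IsSymm)
    (α β : ℝ) (hα : 0 < α) (hβ : 0 < β)
    (hell : ∀ᵐ x ∂(volume.restrict Ω), ∀ ξ : Fin d → ℝ,
      α * (∑ i, ξ i ^ 2) ≤ (A x).mulVec ξ ⬝ᵥ ξ ∧ (A x).mulVec ξ ⬝ᵥ ξ ≤ β * (∑ i, ξ i ^ 2))
    (V : Submodule ℝ (EuclideanSpace ℝ (Fin d) → ℝ))
    (hVdiff : ∀ v ∈ V, ContDiffOn ℝ 1 v Ω)
    (hVL2 : ∀ v ∈ V, MemLp v 2 (volume.restrict Ω))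
    (hVgradL2 : ∀ v ∈ V, MemLp (gradient v) 2 (volume.restrict Ω))
    (f : EuclideanSpace ℝ (Fin d) → ℝ) (hf : MemLp f 2 (volume.restrict Ω))
    (u : EuclideanSpace ℝ (Fin d) → ℝ) (hu : u ∈ V)
    (husol : ∀ v ∈ V,
      ∫ x in Ω, (A x).mulVec (grad u x) ⬝ᵥ grad v x = ∫ x in Ω, f x * v x)
    (uhat : EuclideanSpace ℝ (Fin d) → ℝ) (huhat : uhat ∈ V)
    :
    (Real.sqrt (∫ x in Ω, (A x).mulVec (grad (u - uhat) x) ⬝ᵥ grad (u - uhat) x)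
      = Real.sqrt (∫ x in Ω,
          ((A x)⁻¹).mulVec ((A x).mulVec (grad u x) - (A x).mulVec (grad uhat x))
            ⬝ᵥ ((A x).mulVec (grad u x) - (A x).mulVec (grad uhat x))))
    ∧ ∀ phat : EuclideanSpace ℝ (Fin d) → Fin d → ℝ,
        MemLp phat 2 (volume.restrict Ω) →
        (∀ v ∈ V, ∫ x in Ω, phat x ⬝ᵥ grad v x = ∫ x in Ω, f x * v x) →
        Real.sqrt (∫ x in Ω, (A x).mulVec (grad (u - uhat) x) ⬝ᵥ grad (u - uhat) x)
          ≤ Real.sqrt (∫ x in Ω,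
              ((A x)⁻¹).mulVec (phat x - (A x).mulVec (grad uhat x))
                ⬝ᵥ (phat x - (A x).mulVec (grad uhat x))) := by
  classical
  set μ := volume.restrict Ω with hμ
  have hmem : ∀ᵐ x ∂μ, x ∈ Ω := ae_restrict_mem hΩopen.measurableSet
  have he : u - uhat ∈ V := V.sub_mem hu huhat
  -- gradient of difference
  have hgsub : ∀ x ∈ Ω, grad (u - uhat) x = grad u x - grad uhat x := by
    intro x hx
    have hdu : DifferentiableAt ℝ u x :=
      ((hVdiff u hu).contDiffAt (hΩopen.mem_nhds hx)).differentiableAt one_ne_zero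
    have hduh : DifferentiableAt ℝ uhat x :=
      ((hVdiff uhat huhat).contDiffAt (hΩopen.mem_nhds hx)).differentiableAt one_ne_zero
    have hg : gradient (u - uhat) x = gradient u x - gradient uhat x := by
      unfold gradient
      rw [show (u - uhat) = fun y => u y - uhat y from rfl, fderiv_fun_sub hdu hduh, map_sub]
    unfold grad
    rw [hg, WithLp.ofLp_sub]
  -- componentwise L² of gradients
  have hgc : ∀ v ∈ V, ∀ i, MemLp (fun x => grad v x i) 2 μ := by
    intro v hv i
    exact (EuclideanSpace.proj (𝕜 := ℝ) i).comp_memLp' (hVgradL2 v hv)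
  -- a.e. entry bounds
  have hAbd : ∀ i j, ∀ᵐ x ∂μ, |A x i j| ≤ β := by
    intro i j
    filter_upwards [hell, hmem] with x hx hxm
    exact entry_bound (A x) (hAsymm x hxm) β
      (fun ξ => le_trans (by positivity) (hx ξ).1) (fun ξ => (hx ξ).2) i j
  have hAibd : ∀ i j, ∀ᵐ x ∂μ, |(A x)⁻¹ i j| ≤ α⁻¹ := by
    intro i j
    filter_upwards [hell, hmem] with x hx hxm
    exact entry_bound (A x)⁻¹ (inv_symm (hAsymm x hxm)) α⁻¹
      (fun ξ => (inv_form_bounds hα (fun ζ => (hx ζ).1) ξ).1)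
      (fun ξ => (inv_form_bounds hα (fun ζ => (hx ζ).1) ξ).2) i j
  have hAim : ∀ i j, Measurable fun x => (A x)⁻¹ i j := measurable_inv_entries hAmeas
  -- flux components in L²
  have hflux : ∀ v ∈ V, ∀ i, MemLp (fun x => ((A x) *ᵥ grad v x) i) 2 μ := by
    intro v hv i
    exact mulVec_comp_memL2 hAmeas hAbd (hgc v hv) i
  -- energy integrand is integrable
  have hInt3 : Integrable (fun x => (A x) *ᵥ grad (u - uhat) x ⬝ᵥ grad (u - uhat) x) μ :=
    integrable_mulVec_dot hAmeas hAbd (hgc _ he) (hgc _ he)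
  constructor
  · -- part 1
    congr 1
    refine integral_congr_ae ?_
    filter_upwards [hell, hmem] with x hx hxm
    have hdet := isUnit_det_of_posdef hα (fun ζ => (hx ζ).1)
    have hΔ : (A x) *ᵥ grad u x - (A x) *ᵥ grad uhat x = (A x) *ᵥ grad (u - uhat) x := by
      rw [← Matrix.mulVec_sub, ← hgsub x hxm]
    rw [hΔ, inv_mulVec_cancel hdet, dotProduct_comm]
  · -- part 2
    intro phat hp hSA
    set w := fun x => grad (u - uhat) x with hw
    set s := fun x => phat x - (A x) *ᵥ grad u x with hs
    have hpc : ∀ i, MemLp (fun x => phat x i) 2 μ := by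
      intro i
      refine MemLp.of_le hp ((continuous_apply i).comp_aestronglyMeasurable hp.1) ?_
      exact Filter.Eventually.of_forall fun x => norm_le_pi_norm (phat x) i
    have hsc : ∀ i, MemLp (fun x => s x i) 2 μ := by
      intro i
      exact ((hpc i).sub (hflux u hu i))
    -- pointwise expansion a.e.
    have hident : ∀ᵐ x ∂μ,
        ((A x)⁻¹) *ᵥ (phat x - (A x) *ᵥ grad uhat x) ⬝ᵥ (phat x - (A x) *ᵥ grad uhat x)
          = ((A x)⁻¹ *ᵥ s x ⬝ᵥ s x + 2 * (s x ⬝ᵥ w x)) + (A x) *ᵥ w x ⬝ᵥ w x := by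
      filter_upwards [hell, hmem] with x hx hxm
      have hr : phat x - (A x) *ᵥ grad uhat x = s x + (A x) *ᵥ w x := by
        rw [hs, hw]
        have : (A x) *ᵥ grad (u - uhat) x
            = (A x) *ᵥ grad u x - (A x) *ᵥ grad uhat x := by
          rw [hgsub x hxm, Matrix.mulVec_sub]
        rw [this]
        ext i; simp only [Pi.add_apply, Pi.sub_apply]; ring
      rw [hr, key_expand hα (hAsymm x hxm) (fun ζ => (hx ζ).1) (s x) (w x)]
    have hInt1 : Integrable (fun x => (A x)⁻¹ *ᵥ s x ⬝ᵥ s x) μ :=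
      integrable_mulVec_dot hAim hAibd hsc hsc
    have hInt2 : Integrable (fun x => s x ⬝ᵥ w x) μ :=
      integrable_dot hsc (hgc _ he)
    -- the cross term vanishes
    have hcross : ∫ x, s x ⬝ᵥ w x ∂μ = 0 := by
      have hsplit : ∀ x, s x ⬝ᵥ w x = phat x ⬝ᵥ w x - ((A x) *ᵥ grad u x) ⬝ᵥ w x := by
        intro x; rw [hs]; exact sub_dotProduct _ _ _
      rw [show (fun x => s x ⬝ᵥ w x) = fun x => phat x ⬝ᵥ w x - ((A x) *ᵥ grad u x) ⬝ᵥ w x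
        from funext hsplit]
      rw [integral_sub (integrable_dot hpc (hgc _ he))
        (integrable_mulVec_dot hAmeas hAbd (hgc u hu) (hgc _ he))]
      have h1 : ∫ x, phat x ⬝ᵥ w x ∂μ = ∫ x in Ω, f x * (u - uhat) x := hSA (u - uhat) he
      have h2 : ∫ x, ((A x) *ᵥ grad u x) ⬝ᵥ w x ∂μ = ∫ x in Ω, f x * (u - uhat) x :=
        husol (u - uhat) he
      rw [h1, h2, sub_self]
    -- nonnegativity of the flux error term
    have hpos : 0 ≤ ∫ x, (A x)⁻¹ *ᵥ s x ⬝ᵥ s x ∂μ := by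
      refine integral_nonneg_of_ae ?_
      filter_upwards [hell] with x hx
      exact (inv_form_bounds hα (fun ζ => (hx ζ).1) (s x)).1
    refine Real.sqrt_le_sqrt ?_
    have hInt12 : Integrable (fun x => (A x)⁻¹ *ᵥ s x ⬝ᵥ s x + 2 * (s x ⬝ᵥ w x)) μ := by
      exact hInt1.add (hInt2.const_mul 2)
    have hsum : ∫ x, (((A x)⁻¹ *ᵥ s x ⬝ᵥ s x + 2 * (s x ⬝ᵥ w x)) + (A x) *ᵥ w x ⬝ᵥ w x) ∂μ
        = (∫ x, (A x)⁻¹ *ᵥ s x ⬝ᵥ s x ∂μ + 2 * ∫ x, s x ⬝ᵥ w x ∂μ)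
          + ∫ x, (A x) *ᵥ w x ⬝ᵥ w x ∂μ := by
      rw [integral_add hInt12 hInt3, integral_add hInt1 (hInt2.const_mul 2),
        integral_const_mul 2 _]
    calc ∫ x in Ω, (A x) *ᵥ grad (u - uhat) x ⬝ᵥ grad (u - uhat) x
        ≤ (∫ x, (A x)⁻¹ *ᵥ s x ⬝ᵥ s x ∂μ + 2 * ∫ x, s x ⬝ᵥ w x ∂μ)
          + ∫ x, (A x) *ᵥ w x ⬝ᵥ w x ∂μ := by
          rw [hcross, mul_zero, add_zero]
          exact le_add_of_nonneg_left hpos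
      _ = ∫ x, (((A x)⁻¹ *ᵥ s x ⬝ᵥ s x + 2 * (s x ⬝ᵥ w x)) + (A x) *ᵥ w x ⬝ᵥ w x) ∂μ :=
          hsum.symm
      _ = ∫ x in Ω, ((A x)⁻¹) *ᵥ (phat x - (A x) *ᵥ grad uhat x)
            ⬝ᵥ (phat x - (A x) *ᵥ grad uhat x) := (integral_congr_ae hident).symm
end

section
/- (The recast multiscale problem is well-posed and reproduces the exact solution) Let V be a real Hilbert space, B : V × V → ℝ a continuous, coercive, symmetric bilinear form, and F a continuous linear functional on V; let u ∈ V be the unique element with B(u, v) = F(v) for all v ∈ V. Let V⁰ be a finite-dimensional subspace and V^f a closed subspace of V with V = V⁰ ⊕ V^f (direct sum). For φ ∈ V⁰, let Q_ℓ(φ) ∈ V^f be the unique solution of B(φ + Q_ℓ(φ), w) = 0 for all w ∈ V^f, and let Q₀ ∈ V^f be the unique solution of B(Q₀, w) = F(w) for all w ∈ V^f. Set Ṽ = {φ + Q_ℓ(φ) : φ ∈ V⁰}. Then: (i) there exists a unique ū ∈ Q₀ + Ṽ with B(ū, v) = F(v) for all v ∈ V⁰ (Petrov–Galerkin form); (ii)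 there exists a unique ū ∈ Q₀ + Ṽ with B(ū, v) = F(v) for all v ∈ Ṽ (Galerkin form); and (iii) in both cases ū = u, the exact solution. -/
/-- The recast multiscale (MsFEM) problem is well-posed and reproduces the exact
solution: with `V = V₀ ⊕ Vf`, corrector operators `Qℓ` (linear part) and `Q₀`
(load-dependent part), the Petrov–Galerkin and Galerkin formulations posed on the
affine multiscale space `Q₀ + {φ + Qℓ φ : φ ∈ V₀}` each admit a unique solution,
which coincides with the exact solution `u`. -/
theorem msfem_recast_wellposed_and_exact
    {V : Type*} [NormedAddCommGroup V] [InnerProductSpace ℝ V] [CompleteSpace V]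
    (B : V → V → ℝ)
    (hBaddl : ∀ u v w : V, B (u + v) w = B u w + B v w)
    (hBsmull : ∀ (c : ℝ) (u w : V), B (c • u) w = c * B u w)
    (hBaddr : ∀ u v w : V, B u (v + w) = B u v + B u w)
    (hBsmulr : ∀ (c : ℝ) (u v : V), B u (c • v) = c * B u v)
    (hBsymm : ∀ u v : V, B u v = B v u)
    (hBcont : ∃ C : ℝ, ∀ u v : V, |B u v| ≤ C * ‖u‖ * ‖v‖)
    (hBcoer : ∃ c : ℝ, 0 < c ∧ ∀ v : V, c * ‖v‖ ^ 2 ≤ B v v)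
    (F : V →L[ℝ] ℝ)
    (u : V) (hu : ∀ v : V, B u v = F v)
    (V₀ Vf : Submodule ℝ V)
    (hV₀fin : FiniteDimensional ℝ V₀)
    (hVfclosed : IsClosed (Vf : Set V))
    (hcompl : IsCompl V₀ Vf)
    (Qℓ : V → V)
    (hQℓmem : ∀ φ ∈ V₀, Qℓ φ ∈ Vf)
    (hQℓ : ∀ φ ∈ V₀, ∀ w ∈ Vf, B (φ + Qℓ φ) w = 0)
    (Q₀ : V) (hQ₀mem : Q₀ ∈ Vf)
    (hQ₀ : ∀ w ∈ Vf, B Q₀ w = F w) :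
    (∃! ub : V, (∃ φ ∈ V₀, ub = Q₀ + (φ + Qℓ φ)) ∧ ∀ v ∈ V₀, B ub v = F v)
    ∧ (∃! ub : V, (∃ φ ∈ V₀, ub = Q₀ + (φ + Qℓ φ))
        ∧ ∀ φ' ∈ V₀, B ub (φ' + Qℓ φ') = F (φ' + Qℓ φ'))
    ∧ (∀ ub : V, (∃ φ ∈ V₀, ub = Q₀ + (φ + Qℓ φ)) →
        (∀ v ∈ V₀, B ub v = F v) → ub = u)
    ∧ (∀ ub : V, (∃ φ ∈ V₀, ub = Q₀ + (φ + Qℓ φ)) →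
        (∀ φ' ∈ V₀, B ub (φ' + Qℓ φ') = F (φ' + Qℓ φ')) → ub = u) := by

  obtain ⟨c, hc, hcoer⟩ := hBcoer
  -- `B z z ≤ 0` forces `z = 0`
  have hzero : ∀ z : V, B z z ≤ 0 → z = 0 := by
    intro z hz
    by_contra hne
    have hpos : 0 < ‖z‖ := norm_pos_iff.mpr hne
    nlinarith [hcoer z, mul_pos hc (pow_pos hpos 2)]
  have hBsub : ∀ a b w : V, B (a - b) w = B a w - B b w := by
    intro a b w
    rw [sub_eq_add_neg, hBaddl, ← neg_one_smul ℝ b, hBsmull]; ring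
  -- decompose `u`
  have hutop : u ∈ V₀ ⊔ Vf := by rw [hcompl.sup_eq_top]; trivial
  obtain ⟨φu, hφu, wu, hwu, hsum⟩ := Submodule.mem_sup.mp hutop
  -- `u` lies in the affine multiscale space
  have hueq : u = Q₀ + (φu + Qℓ φu) := by
    set z := u - (Q₀ + (φu + Qℓ φu)) with hz
    have hzmem : z ∈ Vf := by
      have : z = wu - Q₀ - Qℓ φu := by rw [hz, ← hsum]; abel
      rw [this]
      exact Vf.sub_mem (Vf.sub_mem hwu hQ₀mem) (hQℓmem φu hφu)
    have hBz : B z z = 0 := by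
      rw [hz, hBsub, hBaddl, hu, hQ₀ z hzmem, hQℓ φu hφu z hzmem]; ring
    have := hzero z (le_of_eq hBz)
    have : u = Q₀ + (φu + Qℓ φu) := by
      have h := sub_eq_zero.mp this
      exact h
    exact this
  -- any element of the multiscale space tests correctly against `Vf`
  have hVftest : ∀ φ ∈ V₀, ∀ w ∈ Vf, B (Q₀ + (φ + Qℓ φ)) w = F w := by
    intro φ hφ w hw
    rw [hBaddl, hQ₀ w hw, hQℓ φ hφ w hw]; ring
  -- Petrov–Galerkin uniqueness / exactness
  have hPG : ∀ ub : V, (∃ φ ∈ V₀, ub = Q₀ + (φ + Qℓ φ)) →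
      (∀ v ∈ V₀, B ub v = F v) → ub = u := by
    rintro ub ⟨φ, hφ, rfl⟩ hV0
    have hall : ∀ x : V, B (Q₀ + (φ + Qℓ φ)) x = F x := by
      intro x
      have hxtop : x ∈ V₀ ⊔ Vf := by rw [hcompl.sup_eq_top]; trivial
      obtain ⟨a, ha, b, hb, hab⟩ := Submodule.mem_sup.mp hxtop
      rw [← hab, hBaddr, hV0 a ha, hVftest φ hφ b hb, map_add]
    have hBz : B (Q₀ + (φ + Qℓ φ) - u) (Q₀ + (φ + Qℓ φ) - u) = 0 := by
      rw [hBsub]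
      rw [hall, hu]; ring
    exact sub_eq_zero.mp (hzero _ (le_of_eq hBz))
  -- Galerkin reduces to Petrov–Galerkin
  have hG : ∀ ub : V, (∃ φ ∈ V₀, ub = Q₀ + (φ + Qℓ φ)) →
      (∀ φ' ∈ V₀, B ub (φ' + Qℓ φ') = F (φ' + Qℓ φ')) → ub = u := by
    rintro ub ⟨φ, hφ, rfl⟩ hGal
    refine hPG _ ⟨φ, hφ, rfl⟩ ?_
    intro v hv
    have h1 := hGal v hv
    have h2 := hVftest φ hφ (Qℓ v) (hQℓmem v hv)
    have h3 : B (Q₀ + (φ + Qℓ φ)) (v + Qℓ v)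
        = B (Q₀ + (φ + Qℓ φ)) v + B (Q₀ + (φ + Qℓ φ)) (Qℓ v) := hBaddr _ _ _
    have h4 : F (v + Qℓ v) = F v + F (Qℓ v) := map_add F v (Qℓ v)
    linarith [h1, h2, h3.symm.trans h1]
  refine ⟨⟨u, ⟨⟨φu, hφu, hueq⟩, fun v _ => hu v⟩, fun y ⟨hy1, hy2⟩ => hPG y hy1 hy2⟩,
    ⟨u, ⟨⟨φu, hφu, hueq⟩, fun φ' _ => hu _⟩, fun y ⟨hy1, hy2⟩ => hG y hy1 hy2⟩,
    hPG, hG⟩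
end
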